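/- For p > 0, a > 0 and Re ν > -1, ∫_0^∞ e^{-p x²} x^{ν+1} J_ν(a x) dx = a^ν / (2p)^{ν+1} · e^{-a²/(4p)}. -/

import Mathlib

open MeasureTheory Real

/-- Bessel function of the first kind, via its power series. -/
noncomputable def besselJ (ν x : ℝ) : ℝ :=
  ∑' m : ℕ, (-1 : ℝ) ^ m * (x / 2) ^ (ν + 2 * m) / (m.factorial * Real.Gamma (ν + m + 1))

/-- Value of the basic Gaussian-type moment integral. -/
lemma weber_aux_int (ν a p : ℝ) (hp : 0 < p) (ha : 0 < a) (hν : ν > -1) (m : ℕ) :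
    (∫ x in Set.Ioi (0 : ℝ),
        Real.exp (-p * x ^ 2) * x ^ (ν + 1) * ((a / 2) * x) ^ (ν + 2 * m)) =
      (a / 2) ^ (ν + 2 * (m : ℝ)) *
        (p ^ (-(ν + (m : ℝ) + 1)) * (1 / 2) * Real.Gamma (ν + (m : ℝ) + 1)) := by
  have hq : (-1 : ℝ) < 2 * ν + 2 * (m : ℝ) + 1 := by
    have : (0 : ℝ) ≤ (m : ℝ) := Nat.cast_nonneg m
    linarith
  have h1 : (∫ x in Set.Ioi (0 : ℝ),
        Real.exp (-p * x ^ 2) * x ^ (ν + 1) * ((a / 2) * x) ^ (ν + 2 * m)) =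
      ∫ x in Set.Ioi (0 : ℝ),
        (a / 2) ^ (ν + 2 * (m : ℝ)) *
          (x ^ (2 * ν + 2 * (m : ℝ) + 1) * Real.exp (-p * x ^ (2 : ℝ))) := by
    refine setIntegral_congr_fun measurableSet_Ioi (fun x hx => ?_)
    have hx' : (0 : ℝ) < x := hx
    rw [Real.mul_rpow (by positivity) hx'.le,
      show x ^ (2 : ℕ) = x ^ ((2 : ℕ) : ℝ) from (Real.rpow_natCast x 2).symm,
      show (2 * ν + 2 * (m : ℝ) + 1 : ℝ) = (ν + 1) + (ν + 2 * (m : ℝ)) by ring,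
      Real.rpow_add hx' (ν + 1) (ν + 2 * (m : ℝ))]
    push_cast
    ring
  rw [h1, MeasureTheory.integral_const_mul,
    integral_rpow_mul_exp_neg_mul_rpow two_pos hq hp,
    show (-(2 * ν + 2 * (m : ℝ) + 1 + 1) / 2 : ℝ) = -(ν + (m : ℝ) + 1) by ring,
    show ((2 * ν + 2 * (m : ℝ) + 1 + 1) / 2 : ℝ) = ν + (m : ℝ) + 1 by ring]

/-- Algebraic simplification of the coefficient. -/
lemma weber_aux_alg (ν a p : ℝ) (hp : 0 < p) (ha : 0 < a) (m : ℕ) :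
    (a / 2) ^ (ν + 2 * (m : ℝ)) * (p ^ (-(ν + (m : ℝ) + 1)) * (1 / 2)) =
      a ^ ν / (2 * p) ^ (ν + 1) * (a ^ 2 / (4 * p)) ^ m := by
  have h2 : (0 : ℝ) < a / 2 := by positivity
  have h1 : ((a / 2 : ℝ)) ^ (ν + 2 * (m : ℝ)) = (a / 2) ^ ν * ((a / 2) ^ 2) ^ m := by
    rw [show ν + 2 * (m : ℝ) = ν + ((2 * m : ℕ) : ℝ) by push_cast; ring,
      Real.rpow_add h2, Real.rpow_natCast, pow_mul]
  have h2' : p ^ (-(ν + (m : ℝ) + 1)) = (p ^ (ν + 1))⁻¹ * (p ^ m)⁻¹ := by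
    rw [show -(ν + (m : ℝ) + 1) = -(ν + 1) + -((m : ℕ) : ℝ) by ring,
      Real.rpow_add hp, Real.rpow_neg hp.le, Real.rpow_neg hp.le, Real.rpow_natCast]
  have h3 : ((2 * p : ℝ)) ^ (ν + 1) = 2 ^ ν * 2 * p ^ (ν + 1) := by
    rw [Real.mul_rpow (by norm_num) hp.le, Real.rpow_add two_pos, Real.rpow_one]
  have h4 : (a / 2 : ℝ) ^ ν = a ^ ν / 2 ^ ν := Real.div_rpow ha.le (by norm_num) ν
  have hne : (2 : ℝ) ^ ν ≠ 0 := by positivity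
  have hne2 : p ^ (ν + 1) ≠ 0 := by positivity
  have hne3 : (p : ℝ) ^ m ≠ 0 := by positivity
  rw [h1, h2', h3, h4, div_pow (a^2) (4*p) m, mul_pow, div_pow]
  have h44 : ((2:ℝ))^2 = 4 := by norm_num
  rw [h44]
  field_simp
  ring
  rw [mul_assoc, ← mul_pow]; norm_num

/-- Integrability of the basic term. -/
lemma weber_aux_integrable (ν a p : ℝ) (hp : 0 < p) (ha : 0 < a) (hν : ν > -1) (m : ℕ) :
    IntegrableOn
      (fun x => Real.exp (-p * x ^ 2) * x ^ (ν + 1) * ((a / 2) * x) ^ (ν + 2 * m))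
      (Set.Ioi (0 : ℝ)) := by
  have hq : (-1 : ℝ) < 2 * ν + 2 * (m : ℝ) + 1 := by
    have : (0 : ℝ) ≤ (m : ℝ) := Nat.cast_nonneg m
    linarith
  have base := integrableOn_rpow_mul_exp_neg_mul_rpow hq two_pos hp
    (s := 2 * ν + 2 * (m : ℝ) + 1)
  have h5 : IntegrableOn
      (fun x => (a / 2) ^ (ν + 2 * (m : ℝ)) * (x ^ (2 * ν + 2 * (m : ℝ) + 1) *
        Real.exp (-p * x ^ (2:ℝ)))) (Set.Ioi (0:ℝ)) :=
    (base.const_mul ((a / 2) ^ (ν + 2 * (m : ℝ))))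
  refine h5.congr_fun (fun x hx => ?_) measurableSet_Ioi
  have hx' : (0 : ℝ) < x := hx
  beta_reduce
  rw [Real.mul_rpow (by positivity) hx'.le,
    show x ^ (2 : ℕ) = x ^ ((2 : ℕ) : ℝ) from (Real.rpow_natCast x 2).symm,
    show (2 * ν + 2 * (m : ℝ) + 1 : ℝ) = (ν + 1) + (ν + 2 * (m : ℝ)) by ring,
    Real.rpow_add hx' (ν + 1) (ν + 2 * (m : ℝ))]
  push_cast
  ring

theorem weber_first_integral (ν a p : ℝ) (hp : 0 < p) (ha : 0 < a) (hν : ν > -1) :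
    (∫ x in Set.Ioi (0 : ℝ), Real.exp (-p * x ^ 2) * x ^ (ν + 1) * besselJ ν (a * x)) =
      a ^ ν / (2 * p) ^ (ν + 1) * Real.exp (-a ^ 2 / (4 * p)) := by
  set G : ℕ → ℝ → ℝ := fun m x =>
    Real.exp (-p * x ^ 2) * x ^ (ν + 1) *
      ((-1 : ℝ) ^ m * ((a / 2) * x) ^ (ν + 2 * m) /
        (m.factorial * Real.Gamma (ν + m + 1))) with hG
  have hΓ : ∀ m : ℕ, (0 : ℝ) < Real.Gamma (ν + m + 1) := by
    intro m
    apply Real.Gamma_pos_of_pos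
    have : (0 : ℝ) ≤ (m : ℝ) := Nat.cast_nonneg m
    linarith
  have hfac : ∀ m : ℕ, (0 : ℝ) < (m.factorial : ℝ) := fun m => by
    exact_mod_cast m.factorial_pos
  -- each G m is a constant multiple of the basic term
  have hGeq : ∀ m : ℕ, G m = fun x =>
      ((-1 : ℝ) ^ m / (m.factorial * Real.Gamma (ν + m + 1))) *
        (Real.exp (-p * x ^ 2) * x ^ (ν + 1) * ((a / 2) * x) ^ (ν + 2 * m)) := by
    intro m; funext x; simp only [hG]; ring
  have hInt : ∀ m : ℕ, IntegrableOn (G m) (Set.Ioi (0 : ℝ)) := by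
    intro m
    rw [hGeq m]
    exact (weber_aux_integrable ν a p hp ha hν m).const_mul _
  -- value of each integral
  have hval : ∀ m : ℕ,
      (∫ x in Set.Ioi (0 : ℝ), G m x) =
        a ^ ν / (2 * p) ^ (ν + 1) * ((-a ^ 2 / (4 * p)) ^ m / m.factorial) := by
    intro m
    rw [hGeq m, MeasureTheory.integral_const_mul, weber_aux_int ν a p hp ha hν m]
    have hΓ' := (hΓ m).ne'
    have hfac' := (hfac m).ne'
    have hneg : (-a ^ 2 / (4 * p)) ^ m = (-1 : ℝ) ^ m * (a ^ 2 / (4 * p)) ^ m := by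
      rw [← neg_pow, neg_div]
    rw [hneg]
    have step1 : ((-1 : ℝ) ^ m / (m.factorial * Real.Gamma (ν + m + 1))) *
        ((a / 2) ^ (ν + 2 * (m : ℝ)) *
          (p ^ (-(ν + (m : ℝ) + 1)) * (1 / 2) * Real.Gamma (ν + (m : ℝ) + 1))) =
        ((a / 2) ^ (ν + 2 * (m : ℝ)) * (p ^ (-(ν + (m : ℝ) + 1)) * (1 / 2))) *
          ((-1 : ℝ) ^ m / m.factorial) := by
      field_simp
    rw [step1, weber_aux_alg ν a p hp ha m]
    ring
  -- value of each norm integral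
  have hnorm : ∀ m : ℕ,
      (∫ x in Set.Ioi (0 : ℝ), ‖G m x‖) =
        a ^ ν / (2 * p) ^ (ν + 1) * ((a ^ 2 / (4 * p)) ^ m / m.factorial) := by
    intro m
    have hcong : ∀ x ∈ Set.Ioi (0 : ℝ), ‖G m x‖ =
        (1 / (m.factorial * Real.Gamma (ν + m + 1))) *
          (Real.exp (-p * x ^ 2) * x ^ (ν + 1) * ((a / 2) * x) ^ (ν + 2 * m)) := by
      intro x hx
      have hx' : (0 : ℝ) < x := hx
      have hG' : G m x = (-1 : ℝ) ^ m *
          ((1 / (m.factorial * Real.Gamma (ν + m + 1))) *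
            (Real.exp (-p * x ^ 2) * x ^ (ν + 1) * ((a / 2) * x) ^ (ν + 2 * m))) := by
        simp only [hG]; ring
      rw [Real.norm_eq_abs, hG', abs_mul, abs_pow, abs_neg, abs_one, one_pow, one_mul,
        abs_of_nonneg]
      have h1 : (0:ℝ) < Real.Gamma (ν + m + 1) := hΓ m
      have h2 : (0:ℝ) < (m.factorial : ℝ) := hfac m
      positivity
    rw [setIntegral_congr_fun measurableSet_Ioi hcong, MeasureTheory.integral_const_mul,
      weber_aux_int ν a p hp ha hν m]
    have hΓ' := (hΓ m).ne'
    have hfac' := (hfac m).ne'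
    have step1 : (1 / ((m.factorial : ℝ) * Real.Gamma (ν + m + 1))) *
        ((a / 2) ^ (ν + 2 * (m : ℝ)) *
          (p ^ (-(ν + (m : ℝ) + 1)) * (1 / 2) * Real.Gamma (ν + (m : ℝ) + 1))) =
        ((a / 2) ^ (ν + 2 * (m : ℝ)) * (p ^ (-(ν + (m : ℝ) + 1)) * (1 / 2))) *
          (1 / m.factorial) := by
      field_simp
    rw [step1, weber_aux_alg ν a p hp ha m]
    ring
  have hsum : Summable (fun m => ∫ x in Set.Ioi (0 : ℝ), ‖G m x‖) := by
    simp_rw [hnorm]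
    have := (Real.summable_pow_div_factorial (a ^ 2 / (4 * p))).mul_left
      (a ^ ν / (2 * p) ^ (ν + 1))
    simpa using this
  have hHasSum := hasSum_integral_of_summable_integral_norm (μ := volume.restrict (Set.Ioi 0))
    hInt hsum
  have hLHS : (∫ x in Set.Ioi (0 : ℝ),
      Real.exp (-p * x ^ 2) * x ^ (ν + 1) * besselJ ν (a * x)) =
      ∫ x in Set.Ioi (0 : ℝ), ∑' m : ℕ, G m x := by
    refine setIntegral_congr_fun measurableSet_Ioi (fun x hx => ?_)
    rw [besselJ, ← tsum_mul_left]
    congr 1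
    funext m
    simp only [hG]
    rw [show a * x / 2 = (a / 2) * x by ring]
  rw [hLHS, ← hHasSum.tsum_eq]
  have : (fun m => ∫ x in Set.Ioi (0 : ℝ), G m x) =
      fun m => a ^ ν / (2 * p) ^ (ν + 1) * ((-a ^ 2 / (4 * p)) ^ m / m.factorial) := by
    funext m; exact hval m
  rw [show (∫ x in Set.Ioi (0:ℝ), G · x) = fun m => ∫ x in Set.Ioi (0 : ℝ), G m x from rfl]
  rw [this, tsum_mul_left]
  congr 1
  rw [Real.exp_eq_exp_ℝ, NormedSpace.exp_eq_tsum_div]
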